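/- Let A be a Grothendieck category with enough projectives. Suppose every projective object of A has an injective resolution of length at most n and every injective object of A has a projective resolution of length at most n. Then A is Gorenstein of Gorenstein dimension at most n; in particular, every object of finite projective dimension has injective dimension at most n and every object of finite injective dimension has projective dimension at most n. -/
import Mathlib
set_option linter.unusedSectionVars false
set_option maxHeartbeats 1000000


open CategoryTheory CategoryTheory.Limits ZeroObject

universe v u

namespace Stmt2

variable {A : Type u} [Category.{v} A] [Abelian A]

/-- `PdimLE n M` : `M` has projective dimension at most `n`
(i.e. it has a projective resolution of length at most `n`). -/
def PdimLE : ℕ → A → Prop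
  | 0, M => Projective M
  | n + 1, M => Projective M ∨
      ∃ (K P : A) (i : K ⟶ P) (p : P ⟶ M) (w : i ≫ p = 0),
        Projective P ∧ (ShortComplex.mk i p w).ShortExact ∧ PdimLE n K

/-- `IdimLE n M` : `M` has injective dimension at most `n`
(i.e. it has an injective resolution of length at most `n`). -/
def IdimLE : ℕ → A → Prop
  | 0, M => Injective M
  | n + 1, M => Injective M ∨
      ∃ (I K : A) (i : M ⟶ I) (p : I ⟶ K) (w : i ≫ p = 0),
        Injective I ∧ (ShortComplex.mk i p w).ShortExact ∧ IdimLE n K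

/-- `M` has finite projective dimension. -/
def FinPdim (M : A) : Prop := ∃ n, PdimLE n M

/-- `M` has finite injective dimension. -/
def FinIdim (M : A) : Prop := ∃ n, IdimLE n M

/-- An abelian category is *Gorenstein* if finiteness of projective dimension and of
injective dimension agree objectwise, the finitary projective and injective dimensions
are finite, and there is a generator of finite projective dimension. -/
def IsGorenstein (A : Type u) [Category.{v} A] [Abelian A] : Prop :=
  (∀ M : A, FinPdim M ↔ FinIdim M) ∧
  (∃ n : ℕ, (∀ M : A, FinPdim M → PdimLE n M) ∧ (∀ M : A, FinIdim M → IdimLE n M)) ∧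
  (∃ G : A, IsSeparator G ∧ FinPdim G)

/-- Gorenstein with Gorenstein dimension at most `n`. -/
def IsGorensteinDimLE (A : Type u) [Category.{v} A] [Abelian A] (n : ℕ) : Prop :=
  IsGorenstein A ∧
  (∀ M : A, FinPdim M → PdimLE n M) ∧ (∀ M : A, FinIdim M → IdimLE n M)

end Stmt2

open Stmt2

namespace GorensteinAuxPre
-- auxiliary homological algebra lemmas
end GorensteinAuxPre

namespace GorensteinAux

open Stmt2

variable {A : Type u} [Category.{v} A] [Abelian A]

lemma injective_of_retract {M B : A} (s : M ⟶ B) (p : B ⟶ M) (hsp : s ≫ p = 𝟙 M)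
    (hB : Injective B) : Injective M := by
  haveI := hB
  constructor
  intro X Y g f hf
  refine ⟨Injective.factorThru (g ≫ s) f ≫ p, ?_⟩
  rw [← Category.assoc, Injective.comp_factorThru, Category.assoc, hsp, Category.comp_id]

lemma injective_of_isZero {Z : A} (hZ : IsZero Z) : Injective Z := by
  constructor
  intro X Y g f hf
  exact ⟨0, by rw [comp_zero, hZ.eq_of_tgt g 0]⟩

lemma idim_of_injective : ∀ (n : ℕ) {M : A}, Injective M → IdimLE n M
  | 0, _, h => h
  | _ + 1, _, h => Or.inl h

lemma idim_succ : ∀ (n : ℕ) {M : A}, IdimLE n M → IdimLE (n + 1) M := by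
  intro n
  induction n with
  | zero => intro M h; exact Or.inl h
  | succ n ih =>
    rintro M (h | ⟨I, K, i, p, w, hI, hS, hK⟩)
    · exact Or.inl h
    · exact Or.inr ⟨I, K, i, p, w, hI, hS, ih hK⟩

lemma idim_of_iso : ∀ (n : ℕ) {M N : A} (_ : M ≅ N), IdimLE n M → IdimLE n N := by
  intro n
  induction n with
  | zero => intro M N e h; exact Injective.of_iso e h
  | succ n ih =>
    rintro M N e (h | ⟨I, K, i, p, w, hI, hS, hK⟩)
    · exact Or.inl (Injective.of_iso e h)
    · refine Or.inr ⟨I, K, e.inv ≫ i, p, by rw [Category.assoc, w, comp_zero], hI, ?_, hK⟩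
      exact ShortComplex.shortExact_of_iso
        (ShortComplex.isoMk e (Iso.refl I) (Iso.refl K) (by simp) (by simp)) hS

lemma exists_cosyzygy {n : ℕ} {M : A} (h : IdimLE (n + 1) M) :
    ∃ (I K : A) (i : M ⟶ I) (p : I ⟶ K) (w : i ≫ p = 0),
      Injective I ∧ (ShortComplex.mk i p w).ShortExact ∧ IdimLE n K := by
  rcases h with h | h
  · refine ⟨M, 0, 𝟙 M, 0, comp_zero, h, ?_,
      idim_of_injective n (injective_of_isZero (isZero_zero A))⟩
    exact (ShortComplex.Splitting.ofIsIsoOfIsZero _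
      (by dsimp; infer_instance) (isZero_zero A)).shortExact
  · exact h

lemma shortExact_of_isColimit {X Y Z : A} (f : X ⟶ Y) (g : Y ⟶ Z) (w : f ≫ g = 0) [Mono f]
    (h : IsColimit (CokernelCofork.ofπ g w)) : (ShortComplex.mk f g w).ShortExact where
  exact := ShortComplex.exact_of_g_is_cokernel _ h
  mono_f := by assumption
  epi_g := by simpa using epi_of_isColimit_cofork h

lemma ses_mono_cokernel {X Y : A} (f : X ⟶ Y) [Mono f] :
    (ShortComplex.mk f (cokernel.π f) (cokernel.condition f)).ShortExact :=
  shortExact_of_isColimit _ _ _ (cokernelIsCokernel f)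

noncomputable def cokerIso {X Y Z : A} {f : X ⟶ Y} {g : Y ⟶ Z} {w : f ≫ g = 0}
    (hS : (ShortComplex.mk f g w).ShortExact) : cokernel f ≅ Z :=
  IsColimit.coconePointUniqueUpToIso (cokernelIsCokernel f) hS.gIsCokernel

lemma pushout_inr_shortExact {X Y Z : A} (f : X ⟶ Y) (g : X ⟶ Z) [Mono f] :
    ∃ (qq : pushout f g ⟶ cokernel f) (w : pushout.inr f g ≫ qq = 0),
      (ShortComplex.mk (pushout.inr f g) qq w).ShortExact := by
  have hw : f ≫ cokernel.π f = g ≫ (0 : Z ⟶ cokernel f) := by simp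
  set qq : pushout f g ⟶ cokernel f := pushout.desc (cokernel.π f) 0 hw with hqq
  have hinl : pushout.inl f g ≫ qq = cokernel.π f := pushout.inl_desc _ _ _
  have hinr : pushout.inr f g ≫ qq = 0 := pushout.inr_desc _ _ _
  haveI : Epi qq := epi_of_epi_fac hinl
  refine ⟨qq, hinr, shortExact_of_isColimit _ _ _ ?_⟩
  refine CokernelCofork.IsColimit.ofπ' _ _ (fun {W} k hk => ?_)
  have hcond : f ≫ (pushout.inl f g ≫ k) = 0 := by
    rw [← Category.assoc, pushout.condition, Category.assoc, hk, comp_zero]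
  refine ⟨cokernel.desc f (pushout.inl f g ≫ k) hcond, ?_⟩
  apply pushout.hom_ext
  · rw [← Category.assoc, hinl, cokernel.π_desc]
  · rw [← Category.assoc, hinr, zero_comp, hk]

lemma pushout_inl_shortExact {X Y Z : A} (f : X ⟶ Y) (g : X ⟶ Z) [Mono g] :
    ∃ (qq : pushout f g ⟶ cokernel g) (w : pushout.inl f g ≫ qq = 0),
      (ShortComplex.mk (pushout.inl f g) qq w).ShortExact := by
  have hw : f ≫ (0 : Y ⟶ cokernel g) = g ≫ cokernel.π g := by simp
  set qq : pushout f g ⟶ cokernel g := pushout.desc 0 (cokernel.π g) hw with hqq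
  have hinr : pushout.inr f g ≫ qq = cokernel.π g := pushout.inr_desc _ _ _
  have hinl : pushout.inl f g ≫ qq = 0 := pushout.inl_desc _ _ _
  haveI : Epi qq := epi_of_epi_fac hinr
  refine ⟨qq, hinl, shortExact_of_isColimit _ _ _ ?_⟩
  refine CokernelCofork.IsColimit.ofπ' _ _ (fun {W} k hk => ?_)
  have hcond : g ≫ (pushout.inr f g ≫ k) = 0 := by
    rw [← Category.assoc, ← pushout.condition, Category.assoc, hk, comp_zero]
  refine ⟨cokernel.desc g (pushout.inr f g ≫ k) hcond, ?_⟩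
  apply pushout.hom_ext
  · rw [← Category.assoc, hinl, zero_comp, hk]
  · rw [← Category.assoc, hinr, cokernel.π_desc]

lemma comp_mono_shortExact {X Y Z C : A} {u : X ⟶ Y} {pu : Y ⟶ C} {wu : u ≫ pu = 0}
    (hu : (ShortComplex.mk u pu wu).ShortExact) (v : Y ⟶ Z) [Mono v] :
    ∃ (c : C ⟶ cokernel (u ≫ v)) (q : cokernel (u ≫ v) ⟶ cokernel v) (w : c ≫ q = 0),
      (ShortComplex.mk c q w).ShortExact := by
  haveI := hu.mono_f
  haveI := hu.epi_g
  have hc0 : u ≫ (v ≫ cokernel.π (u ≫ v)) = 0 := by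
    rw [← Category.assoc, cokernel.condition]
  set c : C ⟶ cokernel (u ≫ v) := hu.exact.desc (v ≫ cokernel.π (u ≫ v)) hc0 with hcdef
  have hpc : pu ≫ c = v ≫ cokernel.π (u ≫ v) := hu.exact.g_desc _ _
  have hq0 : (u ≫ v) ≫ cokernel.π v = 0 := by
    rw [Category.assoc, cokernel.condition, comp_zero]
  set q : cokernel (u ≫ v) ⟶ cokernel v := cokernel.desc _ (cokernel.π v) hq0 with hqdef
  have hπq : cokernel.π (u ≫ v) ≫ q = cokernel.π v := cokernel.π_desc _ _ _
  have w : c ≫ q = 0 := by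
    rw [← cancel_epi pu, ← Category.assoc, hpc, Category.assoc, hπq,
      cokernel.condition, comp_zero]
  haveI monoc : Mono c := by
    rw [Preadditive.mono_iff_cancel_zero]
    intro T k hk
    have h1 : (pullback.snd k pu ≫ v) ≫ cokernel.π (u ≫ v) = 0 := by
      rw [Category.assoc, ← hpc, ← Category.assoc, ← pullback.condition,
        Category.assoc, hk, comp_zero]
    have hexact := CategoryTheory.ShortComplex.exact_cokernel (u ≫ v)
    obtain ⟨a, ha⟩ := hexact.lift' (pullback.snd k pu ≫ v) h1
    have hau : a ≫ u = pullback.snd k pu := by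
      rw [← cancel_mono v, Category.assoc]
      exact ha
    have h2 : pullback.fst k pu ≫ k = 0 := by
      rw [pullback.condition, ← hau, Category.assoc, wu, comp_zero]
    rwa [← cancel_epi (pullback.fst k pu), comp_zero]
  haveI epiq : Epi q := epi_of_epi_fac hπq
  refine ⟨c, q, w, shortExact_of_isColimit _ _ _ ?_⟩
  refine CokernelCofork.IsColimit.ofπ' _ _ (fun {W} k hk => ?_)
  have hcond : v ≫ (cokernel.π (u ≫ v) ≫ k) = 0 := by
    rw [← Category.assoc, ← hpc, Category.assoc, hk, comp_zero]
  refine ⟨cokernel.desc v (cokernel.π (u ≫ v) ≫ k) hcond, ?_⟩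
  rw [← cancel_epi (cokernel.π (u ≫ v)), ← Category.assoc, hπq, cokernel.π_desc]
lemma biprod_shortExact {X₁ X₂ X₃ Y₁ Y₂ Y₃ : A} {f : X₁ ⟶ X₂} {g : X₂ ⟶ X₃}
    {wx : f ≫ g = 0} (hS : (ShortComplex.mk f g wx).ShortExact)
    {f' : Y₁ ⟶ Y₂} {g' : Y₂ ⟶ Y₃} {wy : f' ≫ g' = 0}
    (hS' : (ShortComplex.mk f' g' wy).ShortExact)
    (w : biprod.map f f' ≫ biprod.map g g' = 0) :
    (ShortComplex.mk (biprod.map f f') (biprod.map g g') w).ShortExact := by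
  haveI := hS.mono_f
  haveI := hS'.mono_f
  haveI := hS.epi_g
  haveI := hS'.epi_g
  haveI : Mono (biprod.map f f') := by
    rw [Preadditive.mono_iff_cancel_zero]
    intro T t ht
    have h1 : (t ≫ biprod.fst) ≫ f = 0 := by
      rw [Category.assoc, ← biprod.map_fst, ← Category.assoc, ht, zero_comp]
    have h2 : (t ≫ biprod.snd) ≫ f' = 0 := by
      rw [Category.assoc, ← biprod.map_snd, ← Category.assoc, ht, zero_comp]
    apply biprod.hom_ext
    · rw [zero_comp]; exact (cancel_mono f).mp (by rw [h1, zero_comp])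
    · rw [zero_comp]; exact (cancel_mono f').mp (by rw [h2, zero_comp])
  haveI : Epi (biprod.map g g') := by
    rw [Preadditive.epi_iff_cancel_zero]
    intro T t ht
    have h1 : g ≫ biprod.inl ≫ t = 0 := by
      rw [← Category.assoc, ← biprod.inl_map, Category.assoc, ht, comp_zero]
    have h2 : g' ≫ biprod.inr ≫ t = 0 := by
      rw [← Category.assoc, ← biprod.inr_map, Category.assoc, ht, comp_zero]
    apply biprod.hom_ext'
    · rw [comp_zero]; exact (cancel_epi g).mp (by rw [h1, comp_zero])
    · rw [comp_zero]; exact (cancel_epi g').mp (by rw [h2, comp_zero])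
  apply shortExact_of_isColimit
  refine CokernelCofork.IsColimit.ofπ' _ _ (fun {W} k hk => ?_)
  have hc1 : f ≫ biprod.inl ≫ k = 0 := by
    rw [← Category.assoc, ← biprod.inl_map, Category.assoc, hk, comp_zero]
  have hc2 : f' ≫ biprod.inr ≫ k = 0 := by
    rw [← Category.assoc, ← biprod.inr_map, Category.assoc, hk, comp_zero]
  refine ⟨biprod.desc (hS.exact.desc (biprod.inl ≫ k) hc1)
    (hS'.exact.desc (biprod.inr ≫ k) hc2), ?_⟩
  apply biprod.hom_ext'
  · rw [← Category.assoc, biprod.inl_map, Category.assoc, biprod.inl_desc]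
    exact hS.exact.g_desc _ _
  · rw [← Category.assoc, biprod.inr_map, Category.assoc, biprod.inr_desc]
    exact hS'.exact.g_desc _ _

lemma idim_biprod : ∀ (n : ℕ) {X Y : A}, IdimLE n X → IdimLE n Y → IdimLE n (X ⊞ Y) := by
  intro n
  induction n with
  | zero =>
    intro X Y hX hY
    haveI : Injective X := hX
    haveI : Injective Y := hY
    show Injective (X ⊞ Y)
    infer_instance
  | succ n ih =>
    intro X Y hX hY
    obtain ⟨I, K, i, p, wi, hI, hSI, hK⟩ := exists_cosyzygy hX
    obtain ⟨J, L, j, q, wj, hJ, hSJ, hL⟩ := exists_cosyzygy hY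
    have hw : biprod.map i j ≫ biprod.map p q = 0 := by
      apply biprod.hom_ext
      · rw [zero_comp, Category.assoc, biprod.map_fst, ← Category.assoc,
          biprod.map_fst, Category.assoc, wi, comp_zero]
      · rw [zero_comp, Category.assoc, biprod.map_snd, ← Category.assoc,
          biprod.map_snd, Category.assoc, wj, comp_zero]
    haveI : Injective I := hI
    haveI : Injective J := hJ
    exact Or.inr ⟨I ⊞ J, K ⊞ L, biprod.map i j, biprod.map p q, hw,
      inferInstance, biprod_shortExact hSI hSJ hw, ih hK hL⟩

/-- Flip a splitting: from a splitting of `X₁ ↪ X₂ ↠ X₃` get a splitting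
of `X₃ ↪ X₂ ↠ X₁` given by the section and retraction. -/
def flipSplitting {S : ShortComplex A} (σ : S.Splitting) :
    ShortComplex.Splitting (ShortComplex.mk σ.s σ.r σ.s_r) where
  r := S.g
  s := S.f
  f_r := σ.s_g
  s_g := σ.f_r
  id := by rw [add_comm]; exact σ.id
/-- Extension closedness of injective dimension. -/
lemma E_lemma : ∀ (n : ℕ) {X Y Z : A} {f : X ⟶ Y} {g : Y ⟶ Z} {w : f ≫ g = 0},
    (ShortComplex.mk f g w).ShortExact → IdimLE n X → IdimLE n Z → IdimLE n Y := by
  intro n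
  induction n with
  | zero =>
    intro X Y Z f g w hS hX hZ
    haveI : Injective X := hX
    haveI : Injective Z := hZ
    have σ := hS.splittingOfInjective
    show Injective Y
    exact Injective.of_iso σ.isoBinaryBiproduct.symm inferInstance
  | succ n ih =>
    intro X Y Z f g w hS hX hZ
    obtain ⟨I, X', jX, pX, wX, hI, hSX, hX'⟩ := exists_cosyzygy hX
    haveI := hS.mono_f
    haveI := hSX.mono_f
    haveI : Injective I := hI
    obtain ⟨q1, wq1, h1⟩ := pushout_inr_shortExact f jX
    obtain ⟨q2, wq2, h2⟩ := pushout_inl_shortExact f jX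
    have σ := h1.splittingOfInjective
    have hQ : IdimLE (n + 1) (pushout f jX) := by
      apply idim_of_iso _ σ.isoBinaryBiproduct.symm
      exact idim_biprod _ (idim_of_injective _ hI) (idim_of_iso _ (cokerIso hS).symm hZ)
    have hA' : IdimLE n (cokernel jX) := idim_of_iso _ (cokerIso hSX).symm hX'
    -- F-step: from SES Y ↪ Q ↠ cokernel jX with IdimLE (n+1) Q and IdimLE n (coker jX)
    obtain ⟨J, Q', jQ, pQ, wQ, hJ, hSQ, hQ'⟩ := exists_cosyzygy hQ
    haveI := h2.mono_f
    haveI := hSQ.mono_f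
    obtain ⟨c, qc, wc, hcq⟩ := comp_mono_shortExact h2 jQ
    have hD : IdimLE n (cokernel (pushout.inl f jX ≫ jQ)) :=
      ih hcq hA' (idim_of_iso _ (cokerIso hSQ).symm hQ')
    exact Or.inr ⟨J, cokernel (pushout.inl f jX ≫ jQ), pushout.inl f jX ≫ jQ,
      cokernel.π _, cokernel.condition _, hJ, ses_mono_cokernel _, hD⟩

/-- If `X ↪ Y ↠ Z` is exact, `IdimLE (n+1) Y` and `IdimLE n Z`, then `IdimLE (n+1) X`. -/
lemma F_lemma (n : ℕ) {X Y Z : A} {f : X ⟶ Y} {g : Y ⟶ Z} {w : f ≫ g = 0}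
    (hS : (ShortComplex.mk f g w).ShortExact) (hY : IdimLE (n + 1) Y) (hZ : IdimLE n Z) :
    IdimLE (n + 1) X := by
  obtain ⟨J, Y', jY, pY, wY, hJ, hSY, hY'⟩ := exists_cosyzygy hY
  haveI := hS.mono_f
  haveI := hSY.mono_f
  obtain ⟨c, q, wcq, hcq⟩ := comp_mono_shortExact hS jY
  have hD : IdimLE n (cokernel (f ≫ jY)) :=
    E_lemma n hcq hZ (idim_of_iso _ (cokerIso hSY).symm hY')
  exact Or.inr ⟨J, cokernel (f ≫ jY), f ≫ jY, cokernel.π _, cokernel.condition _, hJ,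
    ses_mono_cokernel _, hD⟩

/-- If `X ↪ Y ↠ Z` is exact with `IdimLE n X` and `IdimLE n Y`, then `IdimLE n Z`. -/
lemma L_lemma : ∀ (n : ℕ) {X Y Z : A} {f : X ⟶ Y} {g : Y ⟶ Z} {w : f ≫ g = 0},
    (ShortComplex.mk f g w).ShortExact → IdimLE n X → IdimLE n Y → IdimLE n Z := by
  intro n
  cases n with
  | zero =>
    intro X Y Z f g w hS hX hY
    haveI : Injective X := hX
    haveI : Injective Y := hY
    have σ := hS.splittingOfInjective
    show Injective Z
    exact injective_of_retract σ.s g σ.s_g inferInstance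
  | succ n =>
    intro X Y Z f g w hS hX hY
    obtain ⟨I, X', jX, pX, wX, hI, hSX, hX'⟩ := exists_cosyzygy hX
    obtain ⟨J, Y', jY, pY, wY, hJ, hSY, hY'⟩ := exists_cosyzygy hY
    haveI := hS.mono_f
    haveI := hSX.mono_f
    haveI := hSY.mono_f
    haveI : Injective I := hI
    haveI : Injective J := hJ
    -- first pushout: Q := pushout f jX
    obtain ⟨q1, wq1, h1⟩ := pushout_inr_shortExact f jX   -- I ↪ Q ↠ cokernel f
    obtain ⟨q2, wq2, h2⟩ := pushout_inl_shortExact f jX   -- Y ↪ Q ↠ cokernel jX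
    have σ := h1.splittingOfInjective
    have hflip : (ShortComplex.mk σ.s σ.r σ.s_r).ShortExact := (flipSplitting σ).shortExact
    -- second pushout: Q' := pushout (pushout.inl f jX) jY
    haveI : Mono (pushout.inl f jX) := h2.mono_f
    obtain ⟨q3, wq3, h3⟩ := pushout_inr_shortExact (pushout.inl f jX) jY
    obtain ⟨q4, wq4, h4⟩ := pushout_inl_shortExact (pushout.inl f jX) jY
    haveI : Mono (pushout.inl (pushout.inl f jX) jY) := h4.mono_f
    obtain ⟨c, qc, wc, hcq⟩ := comp_mono_shortExact hflip (pushout.inl (pushout.inl f jX) jY)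
    -- hcq : SES I ↪ cokernel (σ.s ≫ inl₂) ↠ cokernel inl₂
    have σD := hcq.splittingOfInjective
    have hcok4 : IdimLE n (cokernel (pushout.inl (pushout.inl f jX) jY)) :=
      idim_of_iso _ (cokerIso h4 ≪≫ cokerIso hSY).symm hY'
    have hD : IdimLE n (cokernel (σ.s ≫ pushout.inl (pushout.inl f jX) jY)) :=
      idim_of_iso _ σD.isoBinaryBiproduct.symm
        (idim_biprod _ (idim_of_injective _ hI) hcok4)
    -- IdimLE (n+1) Q'
    have σ3 := h3.splittingOfInjective
    have hQ' : IdimLE (n + 1) (pushout (pushout.inl f jX) jY) := by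
      apply idim_of_iso _ σ3.isoBinaryBiproduct.symm
      apply idim_biprod
      · exact idim_of_injective _ hJ
      · exact idim_succ _ (idim_of_iso _ (cokerIso h2 ≪≫ cokerIso hSX).symm hX')
    haveI := hflip.mono_f
    have hfin : IdimLE (n + 1) (cokernel f) :=
      F_lemma n (ses_mono_cokernel (σ.s ≫ pushout.inl (pushout.inl f jX) jY)) hQ' hD
    exact idim_of_iso _ (cokerIso hS) hfin
lemma pdim_op : ∀ (n : ℕ) {M : A}, PdimLE n M → IdimLE n (Opposite.op M) := by
  intro n
  induction n with
  | zero =>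
    intro M h
    exact (Injective.projective_iff_injective_op).mp h
  | succ n ih =>
    rintro M (h | ⟨K, P, i, p, w, hP, hS, hK⟩)
    · exact Or.inl ((Injective.projective_iff_injective_op).mp h)
    · refine Or.inr ⟨Opposite.op P, Opposite.op K, p.op, i.op,
        by rw [← op_comp, w]; rfl, (Injective.projective_iff_injective_op).mp hP, ?_, ih hK⟩
      exact hS.op
  
lemma idim_op_to_pdim : ∀ (n : ℕ) {M : A}, IdimLE n (Opposite.op M) → PdimLE n M := by
  intro n
  induction n with
  | zero =>
    intro M h
    exact (Injective.projective_iff_injective_op).mpr h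
  | succ n ih =>
    rintro M (h | ⟨I, K, i, p, w, hI, hS, hK⟩)
    · exact Or.inl ((Injective.projective_iff_injective_op).mpr h)
    · refine Or.inr ⟨K.unop, I.unop, p.unop, i.unop,
        by rw [← unop_comp, w]; rfl, ?_, ?_, ih (M := K.unop) hK⟩
      · exact (Injective.projective_iff_injective_op).mpr hI
      · exact hS.unop

/-- Dual of `L_lemma`: if `X ↪ Y ↠ Z` exact with `PdimLE n Y` and `PdimLE n Z`,
then `PdimLE n X`. -/
lemma L_dual (n : ℕ) {X Y Z : A} {f : X ⟶ Y} {g : Y ⟶ Z} {w : f ≫ g = 0}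
    (hS : (ShortComplex.mk f g w).ShortExact) (hY : PdimLE n Y) (hZ : PdimLE n Z) :
    PdimLE n X :=
  idim_op_to_pdim n (L_lemma n hS.op (pdim_op n hZ) (pdim_op n hY))

end GorensteinAux

open Stmt2 GorensteinAux

/-- Let `A` be a Grothendieck category (abelian, AB5, with a separator)
with enough projectives.  If every projective object has an injective resolution of length
at most `n` and every injective object has a projective resolution of length at most `n`,
then `A` is Gorenstein of Gorenstein dimension at most `n`; in particular every object of
finite projective dimension has injective dimension at most `n` and every object of finite
injective dimension has projective dimension at most `n`. -/
theorem gorenstein_criterion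
    (A : Type u) [Category.{v} A] [Abelian A]
    [HasColimits A] [HasFilteredColimits A] [AB5 A] [HasSeparator A]
    [EnoughProjectives A] (n : ℕ)
    (hproj : ∀ P : A, Projective P → IdimLE n P)
    (hinj : ∀ I : A, Injective I → PdimLE n I) :
    IsGorensteinDimLE A n ∧
      (∀ M : A, FinPdim M → IdimLE n M) ∧ (∀ M : A, FinIdim M → PdimLE n M) := by
  have c1 : ∀ (m : ℕ) (M : A), PdimLE m M → IdimLE n M := by
    intro m
    induction m with
    | zero => intro M h; exact hproj M h
    | succ m ih =>
      rintro M (h | ⟨K, P, i, p, w, hP, hS, hK⟩)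
      · exact hproj M h
      · exact L_lemma n hS (ih K hK) (hproj P hP)
  have c2 : ∀ (m : ℕ) (M : A), IdimLE m M → PdimLE n M := by
    intro m
    induction m with
    | zero => intro M h; exact hinj M h
    | succ m ih =>
      rintro M (h | ⟨I, K, i, p, w, hI, hS, hK⟩)
      · exact hinj M h
      · exact L_dual n hS (hinj I hI) (ih K hK)
  have h1 : ∀ M : A, FinPdim M → IdimLE n M := fun M h => h.elim (fun m hm => c1 m M hm)
  have h2 : ∀ M : A, FinIdim M → PdimLE n M := fun M h => h.elim (fun m hm => c2 m M hm)
  have hp : ∀ M : A, FinPdim M → PdimLE n M := fun M h => c2 n M (h1 M h)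
  have hi : ∀ M : A, FinIdim M → IdimLE n M := fun M h => c1 n M (h2 M h)
  have hsep : ∃ G : A, IsSeparator G ∧ FinPdim G := by
    refine ⟨Projective.over (separator A), ?_, 0, Projective.projective_over _⟩
    rw [isSeparator_def]
    intro X Y f g hfg
    apply (isSeparator_def _).mp (isSeparator_separator A)
    intro h
    have := hfg (Projective.π (separator A) ≫ h)
    rw [Category.assoc, Category.assoc] at this
    exact (cancel_epi (Projective.π (separator A))).mp this
  exact ⟨⟨⟨fun M => ⟨fun h => ⟨n, h1 M h⟩, fun h => ⟨n, h2 M h⟩⟩, ⟨n, hp, hi⟩, hsep⟩,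
    hp, hi⟩, h1, h2⟩
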